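/- arXiv:math/0305095 — 2 statements merged into one kernel-verified Lean document; each statement's English description precedes it below -/
import Mathlib

section
/- Let λ < μ be dominant coweights of an irreducible root system such that the pair (λ, μ) is a minimal degeneration (i.e., μ covers λ in the dominance order restricted to dominant coweights). Then the support of μ − λ, i.e., the set of simple coroots appearing with nonzero coefficient in μ − λ, spans a connected subdiagram of the Dynkin diagram. -/
/-- For a minimal degeneration `λ < μ` of dominant coweights of an
irreducible root system (same encoding as via the Cartan matrix `A`: coweights in
fundamental-coweight coordinates, simple coroot `α̌ᵢ = A i ·`, dominance order given by
nonnegative integer combinations of simple coroots), the support of `μ - λ` — the set of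
indices occurring with nonzero coefficient `c` in `μ - λ = ∑ cₖ α̌ₖ` — spans a connected
subdiagram of the Dynkin diagram (two vertices being adjacent iff the corresponding
Cartan matrix entry is nonzero). -/
theorem support_of_minimal_degeneration_connected
    (I : Type) [Fintype I] [DecidableEq I] (A : Matrix I I ℤ)
    (hdiag : ∀ i, A i i = 2)
    (hoff : ∀ i j, i ≠ j → A i j ≤ 0)
    (hzero : ∀ i j, A i j = 0 ↔ A j i = 0)
    (hirr : ∀ i j : I, Relation.ReflTransGen (fun a b => A a b ≠ 0) i j)
    (hind : LinearIndependent ℤ (fun i => (A i : I → ℤ)))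
    (lam mu : I → ℤ)
    (hlam : ∀ j, 0 ≤ lam j) (hmu : ∀ j, 0 ≤ mu j)      -- λ, μ dominant
    (c : I → ℕ) (hc : mu = lam + ∑ k, (c k : ℤ) • A k)  -- λ ≤ μ, with coefficients c
    (hne : lam ≠ mu)
    -- minimal degeneration: no dominant coweight lies strictly between λ and μ
    (hmin : ∀ ν : I → ℤ, (∀ j, 0 ≤ ν j) →
      (∃ d : I → ℕ, ν = lam + ∑ k, (d k : ℤ) • A k) →
      (∃ d : I → ℕ, mu = ν + ∑ k, (d k : ℤ) • A k) →
      ν = lam ∨ ν = mu) :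
    ∀ i j : I, c i ≠ 0 → c j ≠ 0 →
      Relation.ReflTransGen (fun a b => c a ≠ 0 ∧ c b ≠ 0 ∧ A a b ≠ 0) i j := by
  classical
  intro i j hci hcj
  by_contra hnot
  set R : I → I → Prop := fun a b => c a ≠ 0 ∧ c b ≠ 0 ∧ A a b ≠ 0 with hR
  have hScj : ∀ k, Relation.ReflTransGen R i k → c k ≠ 0 := by
    intro k hk
    induction hk with
    | refl => exact hci
    | tail _ h _ => exact h.2.1
  set d : I → ℕ := fun k => if Relation.ReflTransGen R i k then c k else 0 with hd
  set e : I → ℕ := fun k => if Relation.ReflTransGen R i k then 0 else c k with he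
  have hde : ∀ k, (d k : ℤ) + (e k : ℤ) = (c k : ℤ) := by
    intro k; by_cases h : Relation.ReflTransGen R i k <;> simp [hd, he, h]
  set ν : I → ℤ := lam + ∑ k, (d k : ℤ) • A k with hν
  have hsplit : (∑ k, (c k : ℤ) • A k) = (∑ k, (d k : ℤ) • A k) + (∑ k, (e k : ℤ) • A k) := by
    rw [← Finset.sum_add_distrib]
    refine Finset.sum_congr rfl fun k _ => ?_
    rw [← add_smul, hde]
  have hmuν : mu = ν + ∑ k, (e k : ℤ) • A k := by
    rw [hc, hsplit, hν]; ring
  have happ : ∀ (f : I → ℕ) (x : I), (∑ k, (f k : ℤ) • A k) x = ∑ k, (f k : ℤ) * A k x := by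
    intro f x
    rw [Finset.sum_apply]
    exact Finset.sum_congr rfl fun k _ => rfl
  have hdom : ∀ x, 0 ≤ ν x := by
    intro x
    by_cases hx : c x ≠ 0 ∧ ¬ Relation.ReflTransGen R i x
    · -- ν x = lam x
      have hzeroS : ∀ k, (d k : ℤ) * A k x = 0 := by
        intro k
        by_cases hk : Relation.ReflTransGen R i k
        · have hAx : A k x = 0 := by
            by_contra hA
            exact hx.2 (hk.tail ⟨hScj k hk, hx.1, hA⟩)
          simp [hAx]
        · simp [hd, hk]
      have : ν x = lam x := by
        simp only [hν, Pi.add_apply, happ]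
        rw [Finset.sum_congr rfl fun k _ => hzeroS k]
        simp
      rw [this]; exact hlam x
    · -- ν x ≥ mu x
      have hterm : ∀ k, (e k : ℤ) * A k x ≤ 0 := by
        intro k
        by_cases hk : Relation.ReflTransGen R i k
        · simp [he, hk]
        · by_cases hck : c k = 0
          · simp [he, hk, hck]
          · have hkx : k ≠ x := by
              rintro rfl
              rcases not_and_or.mp hx with h | h
              · exact h hck
              · exact hk (not_not.mp h)
            exact mul_nonpos_of_nonneg_of_nonpos (Int.ofNat_nonneg _) (hoff k x hkx)
      have hsum : (∑ k, (e k : ℤ) • A k) x ≤ 0 := by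
        rw [happ]
        exact Finset.sum_nonpos fun k _ => hterm k
      have : mu x ≤ ν x := by
        have := congrFun hmuν x
        simp only [Pi.add_apply] at this
        omega
      exact le_trans (hmu x) this
  have hlin := Fintype.linearIndependent_iff.mp hind
  rcases hmin ν hdom ⟨d, rfl⟩ ⟨e, hmuν⟩ with h | h
  · have : (∑ k, (d k : ℤ) • A k) = 0 := by
      have := h.symm
      rw [hν] at this
      have : lam + ∑ k, (d k : ℤ) • A k = lam + 0 := by rw [add_zero]; exact this.symm
      exact add_left_cancel this
    have hdi := hlin (fun k => (d k : ℤ)) this i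
    have : d i = c i := by simp [hd, Relation.ReflTransGen.refl]
    omega
  · have : (∑ k, (e k : ℤ) • A k) = 0 := by
      have h2 : ν + ∑ k, (e k : ℤ) • A k = ν + 0 := by rw [add_zero, ← hmuν]; exact h.symm
      exact add_left_cancel h2
    have hej := hlin (fun k => (e k : ℤ)) this j
    have : e j = c j := by simp [he, hnot]
    omega
end

section
/- In the dominance order on dominant coweights of the root system C_n (n ≥ 2), the pair λ = ω̌_n (the fundamental coweight at the long node) and μ = λ + α̌_s, where α̌_s is the short dominant coroot of C_n, is a minimal degeneration: μ is dominant, λ < μ, and any dominant ν with λ ≤ ν ≤ μ equals λ or μ. -/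
/-- The Cartan matrix of type `C_n` (simple roots `α₁, …, α_{n-1}` short, `α_n` long;
0-indexed): `CartanC n i j = ⟨α_j, α̌_i⟩`.  The row `CartanC n i` gives the coordinates
of the simple coroot `α̌ᵢ` in the basis of fundamental coweights. -/
def CartanC (n : ℕ) : Matrix (Fin n) (Fin n) ℤ := fun i j =>
  if i = j then 2
  else if (i : ℕ) + 1 = (j : ℕ) ∨ (j : ℕ) + 1 = (i : ℕ) then
    (if (i : ℕ) = n - 2 ∧ (j : ℕ) = n - 1 then -2 else -1)
  else 0

/-- extend a vector on `Fin n` to `ℕ` by zero -/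
def bvec (n : ℕ) (f : Fin n → ℤ) : ℕ → ℤ := fun m => if h : m < n then f ⟨m, h⟩ else 0

lemma bvec_pos (n : ℕ) (f : Fin n → ℤ) (m : ℕ) (h : m < n) : bvec n f m = f ⟨m, h⟩ :=
  dif_pos h

lemma bvec_neg (n : ℕ) (f : Fin n → ℤ) (m : ℕ) (h : ¬ m < n) : bvec n f m = 0 :=
  dif_neg h

lemma sumcol (n : ℕ) (x : Fin n → ℤ) (m : ℕ) (hm : m < n) :
    ∑ k, x k * CartanC n k ⟨m, hm⟩ =
      2 * bvec n x m
      + (if 0 < m then -((if m = n-1 then 2 else 1) * bvec n x (m-1)) else 0)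
      + (if m + 1 < n then -(bvec n x (m+1)) else 0) := by
  classical
  have key : ∀ k : Fin n, x k * CartanC n k ⟨m, hm⟩ =
      (if (k:ℕ) = m then 2 * x k else 0)
      + (if (k:ℕ) + 1 = m then -((if m = n-1 then 2 else 1) * x k) else 0)
      + (if (k:ℕ) = m + 1 then -(x k) else 0) := by
    intro k
    have hk := k.isLt
    simp only [CartanC, Fin.ext_iff, Fin.val_mk]
    split_ifs <;> first | (exfalso; omega) | ring1
  rw [Finset.sum_congr rfl (fun k _ => key k), Finset.sum_add_distrib, Finset.sum_add_distrib]
  congr 1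
  · congr 1
    · rw [bvec_pos n x m hm, Finset.sum_eq_single (⟨m, hm⟩ : Fin n)]
      · rw [if_pos rfl]
      · intro b _ hb
        rw [if_neg]
        simpa [ne_eq, Fin.ext_iff, Fin.val_mk] using hb
      · simp
    · by_cases h0 : 0 < m
      · rw [if_pos h0, bvec_pos n x (m-1) (by omega),
          Finset.sum_eq_single (⟨m-1, by omega⟩ : Fin n)]
        · rw [if_pos (by simp only [Fin.val_mk]; omega)]
        · intro b _ hb
          rw [if_neg]
          simp only [ne_eq, Fin.ext_iff, Fin.val_mk] at hb
          omega
        · simp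
      · rw [if_neg h0]
        apply Finset.sum_eq_zero
        intro k _
        rw [if_neg]
        omega
  · by_cases h1 : m + 1 < n
    · rw [if_pos h1, bvec_pos n x (m+1) h1, Finset.sum_eq_single (⟨m+1, h1⟩ : Fin n)]
      · rw [if_pos rfl]
      · intro b _ hb
        rw [if_neg]
        simp only [ne_eq, Fin.ext_iff, Fin.val_mk] at hb
        omega
      · simp
    · rw [if_neg h1]
      apply Finset.sum_eq_zero
      intro k _
      have := k.isLt
      rw [if_neg]
      omega

/-- In the dominance order on dominant coweights of the root system `C_n`
(`n ≥ 2`), written in fundamental-coweight coordinates, the pair `λ = ω̌_n` (the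
fundamental coweight at the long node) and `μ = λ + α̌_s`, where
`α̌_s = α̌₁ + ⋯ + α̌_n` is the short dominant coroot of `C_n`, is a minimal
degeneration: `μ` is dominant, `λ < μ`, and every dominant `ν` with `λ ≤ ν ≤ μ` equals
`λ` or `μ`. -/
theorem minimal_degeneration_Cn_case_three
    (n : ℕ) (hn : 2 ≤ n) :
    -- λ = ω̌_n, μ = λ + α̌_s with α̌_s = ∑ᵢ α̌ᵢ
    (∀ j : Fin n,
        0 ≤ ((fun j : Fin n => if (j : ℕ) = n - 1 then (1 : ℤ) else 0) + ∑ i, CartanC n i) j) ∧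
    (∃ c : Fin n → ℕ,
        (fun j : Fin n => if (j : ℕ) = n - 1 then (1 : ℤ) else 0) + ∑ i, CartanC n i =
          (fun j : Fin n => if (j : ℕ) = n - 1 then (1 : ℤ) else 0) +
            ∑ k, (c k : ℤ) • CartanC n k) ∧
    (fun j : Fin n => if (j : ℕ) = n - 1 then (1 : ℤ) else 0) ≠
      (fun j : Fin n => if (j : ℕ) = n - 1 then (1 : ℤ) else 0) + ∑ i, CartanC n i ∧
    (∀ ν : Fin n → ℤ, (∀ j, 0 ≤ ν j) →
      (∃ c : Fin n → ℕ,
        ν = (fun j : Fin n => if (j : ℕ) = n - 1 then (1 : ℤ) else 0) +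
          ∑ k, (c k : ℤ) • CartanC n k) →
      (∃ c : Fin n → ℕ,
        (fun j : Fin n => if (j : ℕ) = n - 1 then (1 : ℤ) else 0) + ∑ i, CartanC n i =
          ν + ∑ k, (c k : ℤ) • CartanC n k) →
      ν = (fun j : Fin n => if (j : ℕ) = n - 1 then (1 : ℤ) else 0) ∨
      ν = (fun j : Fin n => if (j : ℕ) = n - 1 then (1 : ℤ) else 0) + ∑ i, CartanC n i) := by
  classical
  have hS : ∀ j : Fin n, (∑ i, CartanC n i) j = if (j:ℕ) = 0 then 1 else 0 := by
    intro j
    obtain ⟨m, hm⟩ := j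
    rw [(Finset.sum_apply _ _ _ : (∑ i, CartanC n i) ⟨m, hm⟩ = ∑ k, CartanC n k ⟨m, hm⟩),
      Finset.sum_congr rfl (fun k _ => (one_mul (CartanC n k ⟨m, hm⟩)).symm),
      sumcol n (fun _ => 1) m hm]
    simp only [bvec, Fin.val_mk]
    split_ifs <;> omega
  refine ⟨?_, ⟨fun _ => 1, ?_⟩, ?_, ?_⟩
  · intro j
    have hj := j.isLt
    simp only [Pi.add_apply, hS j]
    split_ifs <;> omega
  · simp
  · intro h
    have hz : (0:ℕ) < n := by omega
    have h0 := congrFun h (⟨0, hz⟩ : Fin n)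
    rw [Pi.add_apply, hS ⟨0, hz⟩] at h0
    simp only [Fin.val_mk] at h0
    split_ifs at h0 <;> omega
  · intro ν hν hcE hdE
    obtain ⟨c, hc⟩ := hcE
    obtain ⟨d, hd⟩ := hdE
    -- the difference vector is a combination with coefficients c k + d k - 1 summing to 0
    have hEq : ∀ j : Fin n, ∑ k, ((c k : ℤ) + (d k : ℤ) - 1) * CartanC n k j = 0 := by
      intro j
      have A := congrFun hd j
      have B := congrFun hc j
      simp only [Pi.add_apply, Finset.sum_apply, Pi.smul_apply, smul_eq_mul] at A B
      have expand : ∑ k, ((c k : ℤ) + (d k : ℤ) - 1) * CartanC n k j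
          = (∑ k, (c k : ℤ) * CartanC n k j) + (∑ k, (d k : ℤ) * CartanC n k j)
            - ∑ k, CartanC n k j := by
        rw [← Finset.sum_add_distrib, ← Finset.sum_sub_distrib]
        exact Finset.sum_congr rfl fun k _ => by ring
      rw [expand]
      have hsj : (∑ i, CartanC n i) j = ∑ k, CartanC n k j := Finset.sum_apply _ _ _
      linarith [A, B, hsj]
    have hEKey : ∀ m, m < n →
        2 * bvec n (fun k => ((c k : ℤ) + (d k : ℤ) - 1)) m
        + (if 0 < m then -((if m = n-1 then 2 else 1) *
            bvec n (fun k => ((c k : ℤ) + (d k : ℤ) - 1)) (m-1)) else 0)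
        + (if m + 1 < n then -(bvec n (fun k => ((c k : ℤ) + (d k : ℤ) - 1)) (m+1)) else 0)
        = 0 := by
      intro m hm
      have H := hEq ⟨m, hm⟩
      rwa [sumcol n (fun k => ((c k : ℤ) + (d k : ℤ) - 1)) m hm] at H
    have linrec : ∀ m, m < n →
        bvec n (fun k => ((c k : ℤ) + (d k : ℤ) - 1)) m
          = ((m : ℤ) + 1) * bvec n (fun k => ((c k : ℤ) + (d k : ℤ) - 1)) 0 := by
      intro m
      induction m using Nat.strong_induction_on with
      | _ m ih =>
        intro hm
        rcases m with _ | m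
        · norm_num
        rcases m with _ | m
        · have H := hEKey 0 (by omega)
          rw [if_neg (show ¬ (0:ℕ) < 0 by omega), if_pos (show 0 + 1 < n by omega)] at H
          simp only [zero_add] at H
          push_cast
          linarith
        · have H := hEKey (m+1) (by omega)
          rw [if_pos (show 0 < m + 1 by omega), if_neg (show ¬ m + 1 = n - 1 by omega),
            if_pos (show m + 1 + 1 < n by omega)] at H
          simp only [Nat.add_sub_cancel] at H
          have A := ih (m+1) (by omega) (by omega)
          have B := ih m (by omega) (by omega)
          push_cast
          push_cast at A B
          linear_combination -H + 2*A - B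
    have hE0 : bvec n (fun k => ((c k : ℤ) + (d k : ℤ) - 1)) 0 = 0 := by
      have H := hEKey (n-1) (by omega)
      rw [if_pos (show 0 < n - 1 by omega), if_pos rfl,
        if_neg (show ¬ (n - 1 + 1 < n) by omega)] at H
      rw [show n-1-1 = n-2 from by omega] at H
      have A := linrec (n-1) (by omega)
      have B := linrec (n-2) (by omega)
      have hcast : ((n-1:ℕ):ℤ) = ((n-2:ℕ):ℤ) + 1 := by omega
      rw [A, B, hcast] at H
      have h2 : 2 * bvec n (fun k => ((c k : ℤ) + (d k : ℤ) - 1)) 0 = 0 := by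
        linear_combination H
      omega
    have hcle : ∀ k : Fin n, c k ≤ 1 := by
      intro k
      have hE := linrec k.1 k.isLt
      rw [hE0, mul_zero, bvec_pos n _ _ k.isLt] at hE
      simp only [Fin.eta] at hE
      omega
    -- inequalities from dominance of ν
    have hCKey : ∀ m, m < n →
        0 ≤ (if m = n-1 then (1:ℤ) else 0)
          + (2 * bvec n (fun k => (c k : ℤ)) m
            + (if 0 < m then -((if m = n-1 then 2 else 1) *
                bvec n (fun k => (c k : ℤ)) (m-1)) else 0)
            + (if m + 1 < n then -(bvec n (fun k => (c k : ℤ)) (m+1)) else 0)) := by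
      intro m hm
      have h2 := congrFun hc (⟨m, hm⟩ : Fin n)
      rw [Pi.add_apply, Finset.sum_apply] at h2
      simp only [Pi.smul_apply, smul_eq_mul] at h2
      rw [sumcol n (fun k => (c k : ℤ)) m hm] at h2
      have h1 := hν (⟨m, hm⟩ : Fin n)
      rw [h2] at h1
      simpa only [Fin.val_mk] using h1
    have hbnn : ∀ m, 0 ≤ bvec n (fun k => (c k : ℤ)) m := by
      intro m
      by_cases h : m < n
      · rw [bvec_pos n _ m h]; exact Int.natCast_nonneg _
      · rw [bvec_neg n _ m h]
    have hb01 : ∀ m, bvec n (fun k => (c k : ℤ)) m = 0 ∨ bvec n (fun k => (c k : ℤ)) m = 1 := by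
      intro m
      by_cases h : m < n
      · rw [bvec_pos n _ m h]
        have := hcle ⟨m, h⟩
        omega
      · rw [bvec_neg n _ m h]; left; rfl
    have up : ∀ m, m + 1 < n → bvec n (fun k => (c k : ℤ)) m = 0 →
        bvec n (fun k => (c k : ℤ)) (m+1) = 0 := by
      intro m hm h0
      have H := hCKey m (by omega)
      have n1 := hbnn (m-1)
      have n2 := hbnn (m+1)
      split_ifs at H <;> omega
    have down : ∀ m, 0 < m → m + 1 < n → bvec n (fun k => (c k : ℤ)) m = 0 →
        bvec n (fun k => (c k : ℤ)) (m-1) = 0 := by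
      intro m hm0 hm h0
      have H := hCKey m (by omega)
      have n1 := hbnn (m-1)
      have n2 := hbnn (m+1)
      split_ifs at H <;> omega
    have downlast : bvec n (fun k => (c k : ℤ)) (n-1) = 0 →
        bvec n (fun k => (c k : ℤ)) (n-2) = 0 := by
      intro h0
      have H := hCKey (n-1) (by omega)
      rw [show n-1-1 = n-2 from by omega] at H
      have q := hb01 (n-2)
      split_ifs at H <;> omega
    rcases hb01 (n-1) with hcase | hcase
    · -- all coefficients are 0, ν = λ
      have alldown : ∀ t, t ≤ n-2 → bvec n (fun k => (c k : ℤ)) (n-2-t) = 0 := by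
        intro t
        induction t with
        | zero =>
          intro _
          simpa using downlast hcase
        | succ t ih =>
          intro ht
          have prev := ih (by omega)
          have := down (n-2-t) (by omega) (by omega) prev
          rwa [show n-2-t-1 = n-2-(t+1) from by omega] at this
      have hc0 : ∀ k : Fin n, c k = 0 := by
        intro k
        have hk := k.isLt
        have hbk : bvec n (fun k => (c k : ℤ)) k.1 = 0 := by
          by_cases hke : k.1 = n-1
          · rw [hke]; exact hcase
          · have := alldown (n-2-k.1) (by omega)
            rwa [show n-2-(n-2-k.1) = k.1 from by omega] at this
        rw [bvec_pos n _ _ k.isLt] at hbk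
        simp only [Fin.eta] at hbk
        omega
      left
      have hsum : ∑ k, ((c k : ℤ)) • CartanC n k = 0 :=
        Finset.sum_eq_zero fun k _ => by rw [hc0 k]; simp
      rw [hc, hsum, add_zero]
    · -- all coefficients are 1, ν = μ
      have allup : ∀ t m, m < n → bvec n (fun k => (c k : ℤ)) m = 0 → m + t < n →
          bvec n (fun k => (c k : ℤ)) (m+t) = 0 := by
        intro t
        induction t with
        | zero =>
          intro m _ h0 _
          simpa using h0
        | succ t ih =>
          intro m hm h0 hmt
          have prev := ih m hm h0 (by omega)
          have := up (m+t) (by omega) prev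
          rwa [show m+t+1 = m+(t+1) from by omega] at this
      have hc1 : ∀ k : Fin n, c k = 1 := by
        intro k
        have hk := k.isLt
        have hbk : bvec n (fun k => (c k : ℤ)) k.1 = 1 := by
          rcases hb01 k.1 with h | h
          · exfalso
            have := allup (n-1-k.1) k.1 hk h (by omega)
            rw [show k.1 + (n-1-k.1) = n-1 from by omega] at this
            omega
          · exact h
        rw [bvec_pos n _ _ k.isLt] at hbk
        simp only [Fin.eta] at hbk
        omega
      right
      have hsum : ∑ k, ((c k : ℤ)) • CartanC n k = ∑ i, CartanC n i :=
        Finset.sum_congr rfl fun k _ => by rw [hc1 k]; simp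
      rw [hc, hsum]
end
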